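/- Let k be a field, Q a prime ideal of k[a] = k[a_1,…,a_m], and J an ideal of k[a,x]; set J̃ = J + Q·k[a,x]. Let G be a minimal Gröbner basis of J̃ with respect to the block well order <, let 𝒢 = {g ∈ G : g ∉ Q} and let h = ∏_{g∈𝒢} lc_≺(g) ∈ k[a]. Then for every prime ideal P of k[a] with Q ⊆ P and h ∉ P, the set {(g)_P : g ∈ 𝒢} is a ≺-Gröbner basis of the ideal (J)_P of F(P)[x]: each (g)_P belongs to (J)_P, and Exp_≺((J)_P) = ⋃_{g∈𝒢}(exp_≺((g)_P)+ℕ^n). -/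

import Mathlib

set_option maxHeartbeats 1000000
set_option synthInstance.maxHeartbeats 400000

noncomputable section

/-- A monomial order: a linear (strict total) order on an additive monoid of exponents,
compatible with addition. -/
structure IsMonomialOrder {M : Type*} [AddCommMonoid M] (lt : M → M → Prop) : Prop where
  total : ∀ a b, lt a b ∨ a = b ∨ lt b a
  irrefl : ∀ a, ¬ lt a a
  trans : ∀ a b c, lt a b → lt b c → lt a c
  add_right : ∀ a b c, lt a b → lt (a + c) (b + c)

/-- A monomial well order: a monomial order for which `0` is the least element. -/
structure IsWellMonomialOrder {M : Type*} [AddCommMonoid M] (lt : M → M → Prop)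
    extends IsMonomialOrder lt : Prop where
  zero_le : ∀ a, a = 0 ∨ lt 0 a

/-- `e + ℕ^σ` inside the exponent monoid `σ →₀ ℕ`. -/
def upSetG {σ : Type*} (e : σ →₀ ℕ) : Set (σ →₀ ℕ) := {α | ∃ γ, α = e + γ}

/-- `e` is the `lt`-greatest exponent of the nonzero polynomial `f`. -/
def IsExpP {σ : Type*} {k : Type*} [CommSemiring k]
    (lt : (σ →₀ ℕ) → (σ →₀ ℕ) → Prop) (f : MvPolynomial σ k) (e : σ →₀ ℕ) : Prop :=
  e ∈ f.support ∧ ∀ β ∈ f.support, β ≠ e → lt β e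

/-- The set of `lt`-leading exponents of the nonzero elements of an ideal of polynomials. -/
def ExpSetP {σ : Type*} {k : Type*} [CommSemiring k]
    (lt : (σ →₀ ℕ) → (σ →₀ ℕ) → Prop) (I : Ideal (MvPolynomial σ k)) : Set (σ →₀ ℕ) :=
  {e | ∃ f ∈ I, IsExpP lt f e}

/-- The `x`-part of an exponent of `k[a,x]`. -/
def xpart {m n : ℕ} (μ : (Fin m ⊕ Fin n) →₀ ℕ) : Fin n →₀ ℕ :=
  (Finsupp.sumFinsuppEquivProdFinsupp μ).2

/-- The `a`-part of an exponent of `k[a,x]`. -/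
def apart {m n : ℕ} (μ : (Fin m ⊕ Fin n) →₀ ℕ) : Fin m →₀ ℕ :=
  (Finsupp.sumFinsuppEquivProdFinsupp μ).1

/-- `e` is the `prec`-greatest `x`-exponent `exp_≺(f)` occurring in `f ∈ k[a,x]`. -/
def IsExpX {m n : ℕ} {k : Type*} [CommSemiring k]
    (prec : (Fin n →₀ ℕ) → (Fin n →₀ ℕ) → Prop)
    (f : MvPolynomial (Fin m ⊕ Fin n) k) (e : Fin n →₀ ℕ) : Prop :=
  (∃ μ ∈ f.support, xpart μ = e) ∧ ∀ μ ∈ f.support, xpart μ ≠ e → prec (xpart μ) e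

/-- `lc_≺(f) ∈ k[a]`: the coefficient of `x^e` in `f ∈ k[a,x]` viewed as a polynomial in
`x` over `k[a]`. -/
def lcx {m n : ℕ} {k : Type*} [CommSemiring k]
    (f : MvPolynomial (Fin m ⊕ Fin n) k) (e : Fin n →₀ ℕ) : MvPolynomial (Fin m) k :=
  ∑ μ ∈ f.support.filter (fun μ => xpart μ = e),
    MvPolynomial.monomial (apart μ) (MvPolynomial.coeff μ f)

/-- The block order `<` on the exponents of `k[a,x]` built from `prec` (on the `x`-part)
and `lt0` (on the `a`-part). -/
def blockLt {m n : ℕ} (prec : (Fin n →₀ ℕ) → (Fin n →₀ ℕ) → Prop)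
    (lt0 : (Fin m →₀ ℕ) → (Fin m →₀ ℕ) → Prop)
    (μ μ' : (Fin m ⊕ Fin n) →₀ ℕ) : Prop :=
  prec (xpart μ) (xpart μ') ∨ (xpart μ = xpart μ' ∧ lt0 (apart μ) (apart μ'))

/-- The embedding `k[a] → k[a,x]`. -/
def embA {m n : ℕ} {k : Type*} [CommSemiring k] :
    MvPolynomial (Fin m) k →+* MvPolynomial (Fin m ⊕ Fin n) k :=
  (MvPolynomial.rename (Sum.inl : Fin m → Fin m ⊕ Fin n)).toRingHom
/-- The specialization `k[a] → F(P) = Frac(k[a]/P)`. -/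
def specAHom {m : ℕ} (k : Type*) [Field k] (P : Ideal (MvPolynomial (Fin m) k)) :
    MvPolynomial (Fin m) k →+* FractionRing (MvPolynomial (Fin m) k ⧸ P) :=
  (algebraMap (MvPolynomial (Fin m) k ⧸ P)
    (FractionRing (MvPolynomial (Fin m) k ⧸ P))).comp (Ideal.Quotient.mk P)

/-- The coefficientwise specialization `k[a,x] → F(P)[x]`. -/
def specPoly {m n : ℕ} (k : Type*) [Field k] (P : Ideal (MvPolynomial (Fin m) k)) :
    MvPolynomial (Fin m ⊕ Fin n) k →+*
      MvPolynomial (Fin n) (FractionRing (MvPolynomial (Fin m) k ⧸ P)) :=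
  MvPolynomial.eval₂Hom
    ((MvPolynomial.C :
        FractionRing (MvPolynomial (Fin m) k ⧸ P) →+* _).comp
      ((specAHom k P).comp (MvPolynomial.C)))
    (Sum.elim (fun i => MvPolynomial.C (specAHom k P (MvPolynomial.X i)))
      (fun j => MvPolynomial.X j))

namespace Aux

variable {M : Type*} [AddCommMonoid M] {lt : M → M → Prop}

/-- non-strict version -/
def leR (lt : M → M → Prop) (a b : M) : Prop := lt a b ∨ a = b

theorem IWMO.add_left (h : IsMonomialOrder lt) (a b c : M) (hab : lt a b) :
    lt (c + a) (c + b) := by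
  rw [add_comm c a, add_comm c b]; exact h.add_right a b c hab

theorem IWMO.le_add (h : IsWellMonomialOrder lt) (a γ : M) : leR lt a (a + γ) := by
  rcases h.zero_le γ with h0 | h0
  · right; rw [h0, add_zero]
  · left; simpa using IWMO.add_left h.toIsMonomialOrder 0 γ a h0

theorem IWMO.leR_add_right (h : IsMonomialOrder lt) {a b : M} (c : M) (hab : leR lt a b) :
    leR lt (a + c) (b + c) := by
  rcases hab with hl | rfl
  · exact Or.inl (h.add_right _ _ _ hl)
  · exact Or.inr rfl

theorem IWMO.leR_trans (h : IsMonomialOrder lt) {a b c : M} (h1 : leR lt a b)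
    (h2 : leR lt b c) : leR lt a c := by
  rcases h1 with h1 | rfl
  · rcases h2 with h2 | rfl
    · exact Or.inl (h.trans _ _ _ h1 h2)
    · exact Or.inl h1
  · exact h2

/-- existence of a maximum of a nonempty finset w.r.t. a linear relation -/
theorem exists_max_rel (h : IsMonomialOrder lt) (s : Finset M) (hs : s.Nonempty) :
    ∃ e ∈ s, ∀ b ∈ s, b ≠ e → lt b e := by
  classical
  induction s using Finset.induction with
  | empty => exact absurd hs (by simp)
  | @insert a s ha IH =>
    rcases s.eq_empty_or_nonempty with rfl | hsne
    · exact ⟨a, by simp, by simp⟩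
    · obtain ⟨e, he, hmax⟩ := IH hsne
      rcases h.total a e with hlt | rfl | hlt
      · refine ⟨e, by simp [he], ?_⟩
        intro b hb hbe
        rcases Finset.mem_insert.1 hb with rfl | hb
        · exact hlt
        · exact hmax b hb hbe
      · exact ⟨a, by simp, fun b hb hbe => by
          rcases Finset.mem_insert.1 hb with rfl | hb
          · exact absurd rfl hbe
          · exact hmax b hb hbe⟩
      · refine ⟨a, by simp, ?_⟩
        intro b hb hba
        rcases Finset.mem_insert.1 hb with rfl | hb
        · exact absurd rfl hba
        · rcases h.total b e with h1 | rfl | h1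
          · exact h.trans _ _ _ h1 hlt
          · exact hlt
          · exact absurd (hmax b hb (by rintro rfl; exact (h.irrefl _ h1))) fun hh =>
              h.irrefl _ (h.trans _ _ _ h1 hh)


end Aux


namespace Aux
variable {σ k : Type*} [CommSemiring k] {lt : (σ →₀ ℕ) → (σ →₀ ℕ) → Prop}

theorem exists_isExpP (h : IsMonomialOrder lt) {f : MvPolynomial σ k} (hf : f ≠ 0) :
    ∃ e, IsExpP lt f e := by
  obtain ⟨e, he, hmax⟩ := exists_max_rel h f.support
    (by rwa [Finset.nonempty_iff_ne_empty, Ne, MvPolynomial.support_eq_empty])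
  exact ⟨e, he, hmax⟩

theorem isExpP_unique (h : IsMonomialOrder lt) {f : MvPolynomial σ k} {e e' : σ →₀ ℕ}
    (h1 : IsExpP lt f e) (h2 : IsExpP lt f e') : e = e' := by
  by_contra hne
  exact h.irrefl e (h.trans _ _ _ (h2.2 e h1.1 hne) (h1.2 e' h2.1 (Ne.symm hne)))

/-- leading exponents bound the support -/
theorem le_of_isExpP (h : IsMonomialOrder lt) {f : MvPolynomial σ k} {e : σ →₀ ℕ}
    (hf : IsExpP lt f e) {β : σ →₀ ℕ} (hβ : β ∈ f.support) : leR lt β e := by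
  by_cases hb : β = e
  · exact Or.inr hb
  · exact Or.inl (hf.2 β hβ hb)

/-- a monomial well order on `σ →₀ ℕ`, `σ` finite, is well-founded -/
theorem wf_of_isWellMonomialOrder [Finite σ] (h : IsWellMonomialOrder lt) :
    WellFounded lt := by
  haveI : IsIrrefl (σ →₀ ℕ) lt := ⟨h.irrefl⟩
  haveI : IsTrans (σ →₀ ℕ) lt := ⟨h.trans⟩
  haveI : IsStrictOrder (σ →₀ ℕ) lt := {}
  rw [RelEmbedding.wellFounded_iff_isEmpty]
  constructor
  intro g
  obtain ⟨i, j, hij, hle⟩ := (Set.isPWO_of_wellQuasiOrderedLE (Set.range g)).exists_lt (f := g) (fun n => Set.mem_range_self n)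
  -- g j < g i in lt (descending), but g i ≤ g j pointwise
  obtain ⟨γ, hγ⟩ : ∃ γ, g j = g i + γ := ⟨g j - g i, by ext s; simp [Finsupp.tsub_apply,
    Nat.add_sub_cancel' (hle s)]⟩
  have hdesc : lt (g j) (g i) := by
    clear hγ hle
    induction hij with
    | refl => exact g.map_rel_iff.2 (Nat.lt_succ_self i)
    | step h2 IH =>
      · exact h.trans _ _ _ (g.map_rel_iff.2 (Nat.lt_succ_self _)) IH
  rcases IWMO.le_add h (g i) γ with hlt | heq
  · rw [← hγ] at hlt; exact h.irrefl _ (h.trans _ _ _ hlt hdesc)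
  · rw [← hγ] at heq; rw [heq] at hdesc; exact h.irrefl _ hdesc

end Aux


namespace Aux
variable {m n : ℕ}

@[simp] theorem xpart_apply (μ : (Fin m ⊕ Fin n) →₀ ℕ) (j : Fin n) :
    xpart μ j = μ (Sum.inr j) := Finsupp.snd_sumFinsuppEquivProdFinsupp μ j

@[simp] theorem apart_apply (μ : (Fin m ⊕ Fin n) →₀ ℕ) (i : Fin m) :
    apart μ i = μ (Sum.inl i) := Finsupp.fst_sumFinsuppEquivProdFinsupp μ i

@[simp] theorem xpart_add (μ ν : (Fin m ⊕ Fin n) →₀ ℕ) :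
    xpart (μ + ν) = xpart μ + xpart ν := by ext j; simp
@[simp] theorem apart_add (μ ν : (Fin m ⊕ Fin n) →₀ ℕ) :
    apart (μ + ν) = apart μ + apart ν := by ext i; simp
@[simp] theorem xpart_zero : xpart (0 : (Fin m ⊕ Fin n) →₀ ℕ) = 0 := by ext j; simp
@[simp] theorem apart_zero : apart (0 : (Fin m ⊕ Fin n) →₀ ℕ) = 0 := by ext i; simp

@[simp] theorem xpart_sumElim (γ : Fin m →₀ ℕ) (β : Fin n →₀ ℕ) :
    xpart (Finsupp.sumElim γ β) = β := by ext j; simp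
@[simp] theorem apart_sumElim (γ : Fin m →₀ ℕ) (β : Fin n →₀ ℕ) :
    apart (Finsupp.sumElim γ β) = γ := by ext i; simp

theorem sumElim_parts (μ : (Fin m ⊕ Fin n) →₀ ℕ) :
    Finsupp.sumElim (apart μ) (xpart μ) = μ := by
  ext s; cases s <;> simp

theorem eq_of_parts {μ ν : (Fin m ⊕ Fin n) →₀ ℕ} (h1 : apart μ = apart ν)
    (h2 : xpart μ = xpart ν) : μ = ν := by
  rw [← sumElim_parts μ, ← sumElim_parts ν, h1, h2]

theorem sumElim_add (γ γ' : Fin m →₀ ℕ) (β β' : Fin n →₀ ℕ) :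
    Finsupp.sumElim γ β + Finsupp.sumElim γ' β' = Finsupp.sumElim (γ + γ') (β + β') := by
  ext s; cases s <;> simp

variable {prec : (Fin n →₀ ℕ) → (Fin n →₀ ℕ) → Prop}
variable {lt0 : (Fin m →₀ ℕ) → (Fin m →₀ ℕ) → Prop}

theorem blockLt_isWMO (hp : IsWellMonomialOrder prec) (h0 : IsWellMonomialOrder lt0) :
    IsWellMonomialOrder (blockLt prec lt0) := by
  constructor
  case zero_le =>
    intro μ
    rcases hp.zero_le (xpart μ) with hx | hx
    · rcases h0.zero_le (apart μ) with ha | ha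
      · left; exact (eq_of_parts (by simp [ha]) (by simp [hx])).symm
      · right; right; exact ⟨by simp [hx], by simpa using ha⟩
    · right; left; simpa using hx
  constructor
  · -- total
    intro μ ν
    rcases hp.total (xpart μ) (xpart ν) with h | h | h
    · exact Or.inl (Or.inl h)
    · rcases h0.total (apart μ) (apart ν) with h' | h' | h'
      · exact Or.inl (Or.inr ⟨h, h'⟩)
      · exact Or.inr (Or.inl (eq_of_parts h' h))
      · exact Or.inr (Or.inr (Or.inr ⟨h.symm, h'⟩))
    · exact Or.inr (Or.inr (Or.inl h))
  · -- irrefl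
    rintro μ (h | ⟨-, h⟩)
    · exact hp.irrefl _ h
    · exact h0.irrefl _ h
  · -- trans
    rintro μ ν ρ (h1 | ⟨he1, h1⟩) (h2 | ⟨he2, h2⟩)
    · exact Or.inl (hp.trans _ _ _ h1 h2)
    · exact Or.inl (he2 ▸ h1)
    · exact Or.inl (he1 ▸ h2)
    · exact Or.inr ⟨he1.trans he2, h0.trans _ _ _ h1 h2⟩
  · -- add_right
    rintro μ ν ρ (h | ⟨he, h⟩)
    · exact Or.inl (by simpa using hp.add_right _ _ (xpart ρ) h)
    · exact Or.inr ⟨by simp [he], by simpa using h0.add_right _ _ (apart ρ) h⟩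

/-- the x-part of the blockLt-leading exponent is the prec-leading x-exponent -/
theorem isExpX_of_isExpP {k : Type*} [CommSemiring k]
    {f : MvPolynomial (Fin m ⊕ Fin n) k} {μ : (Fin m ⊕ Fin n) →₀ ℕ}
    (h : IsExpP (blockLt prec lt0) f μ) : IsExpX prec f (xpart μ) := by
  refine ⟨⟨μ, h.1, rfl⟩, fun ν hν hne => ?_⟩
  rcases h.2 ν hν (fun hh => hne (by rw [hh])) with h' | ⟨h', -⟩
  · exact h'
  · exact absurd h' hne

theorem isExpX_unique (hp : IsMonomialOrder prec) {k : Type*} [CommSemiring k]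
    {f : MvPolynomial (Fin m ⊕ Fin n) k} {e e' : Fin n →₀ ℕ}
    (h1 : IsExpX prec f e) (h2 : IsExpX prec f e') : e = e' := by
  by_contra hne
  obtain ⟨μ, hμ, rfl⟩ := h1.1
  obtain ⟨ν, hν, rfl⟩ := h2.1
  exact hp.irrefl _ (hp.trans _ _ _ (h2.2 μ hμ hne) (h1.2 ν hν (Ne.symm hne)))

end Aux


namespace Aux
open MvPolynomial
variable {m n : ℕ} {k : Type*} [CommSemiring k]

theorem coeff_lcx (f : MvPolynomial (Fin m ⊕ Fin n) k) (α : Fin n →₀ ℕ) (γ : Fin m →₀ ℕ) :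
    coeff γ (lcx f α) = coeff (Finsupp.sumElim γ α) f := by
  classical
  unfold lcx
  rw [MvPolynomial.coeff_sum]
  rw [Finset.sum_eq_single (Finsupp.sumElim γ α)]
  · by_cases h : Finsupp.sumElim γ α ∈ f.support.filter (fun μ => xpart μ = α)
    · simp [coeff_monomial]
    · have : coeff (Finsupp.sumElim γ α) f = 0 := by
        by_contra hne
        exact h (Finset.mem_filter.2 ⟨MvPolynomial.mem_support_iff.2 hne, by simp⟩)
      simp [coeff_monomial, this]
  · intro μ hμ hne
    rw [coeff_monomial]
    rw [Finset.mem_filter] at hμ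
    have : apart μ ≠ γ := by
      intro h
      exact hne (by rw [← sumElim_parts μ, h, hμ.2])
    simp [this]
  · intro h
    by_cases h' : Finsupp.sumElim γ α ∈ f.support.filter (fun μ => xpart μ = α)
    · exact absurd h' h
    · have : coeff (Finsupp.sumElim γ α) f = 0 := by
        by_contra hne
        exact h' (Finset.mem_filter.2 ⟨MvPolynomial.mem_support_iff.2 hne, by simp⟩)
      simp [coeff_monomial, this]

theorem lcx_add (f g : MvPolynomial (Fin m ⊕ Fin n) k) (α : Fin n →₀ ℕ) :
    lcx (f + g) α = lcx f α + lcx g α := by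
  ext γ; simp [coeff_lcx, MvPolynomial.coeff_add]

theorem lcx_eq_zero {f : MvPolynomial (Fin m ⊕ Fin n) k} {α : Fin n →₀ ℕ}
    (h : ∀ μ ∈ f.support, xpart μ ≠ α) : lcx f α = 0 := by
  ext γ
  rw [coeff_lcx]
  by_contra hne
  exact h _ (MvPolynomial.mem_support_iff.2 (by simpa using hne)) (by simp)

theorem lcx_monomial_mul (ν : (Fin m ⊕ Fin n) →₀ ℕ) (c : k)
    (f : MvPolynomial (Fin m ⊕ Fin n) k) (α : Fin n →₀ ℕ) :
    lcx (monomial ν c * f) (xpart ν + α) =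
      monomial (apart ν) c * lcx f α := by
  classical
  ext γ
  rw [coeff_lcx, MvPolynomial.coeff_monomial_mul', MvPolynomial.coeff_monomial_mul']
  by_cases h : apart ν ≤ γ
  · have h2 : ν ≤ Finsupp.sumElim γ (xpart ν + α) := by
      rw [← sumElim_parts ν, Finsupp.le_iff]
      intro s hs
      cases s with
      | inl i => simpa using h i
      | inr j => simp
    have h3 : Finsupp.sumElim γ (xpart ν + α) - ν = Finsupp.sumElim (γ - apart ν) α := by
      refine Finsupp.ext fun s => ?_
      cases s with
      | inl i => simp [Finsupp.tsub_apply]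
      | inr j => simp [Finsupp.tsub_apply]
    rw [if_pos h, if_pos h2, coeff_lcx, h3]
  · have h2 : ¬ ν ≤ Finsupp.sumElim γ (xpart ν + α) := by
      intro hh
      refine h fun i => ?_
      have := hh (Sum.inl i)
      simpa using this
    rw [if_neg h, if_neg h2]

theorem lcx_embA_mul (q : MvPolynomial (Fin m) k)
    (f : MvPolynomial (Fin m ⊕ Fin n) k) (α : Fin n →₀ ℕ) :
    lcx ((embA (n := n) q) * f) α = q * lcx f α := by
  classical
  have hq : q = ∑ γ ∈ q.support, monomial γ (coeff γ q) :=
    (MvPolynomial.support_sum_monomial_coeff q).symm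
  rw [hq]
  rw [map_sum, Finset.sum_mul, Finset.sum_mul]
  have : ∀ γ ∈ q.support,
      lcx ((embA (n := n) (monomial γ (coeff γ q))) * f) α =
        monomial γ (coeff γ q) * lcx f α := by
    intro γ _
    have he : embA (n := n) (monomial γ (coeff γ q)) =
        monomial (Finsupp.sumElim γ 0) (coeff γ q) := by
      show MvPolynomial.rename Sum.inl (monomial γ (coeff γ q)) = _
      rw [MvPolynomial.rename_monomial]
      have hd : Finsupp.mapDomain (Sum.inl : Fin m → Fin m ⊕ Fin n) γ =
          Finsupp.sumElim γ (0 : Fin n →₀ ℕ) := by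
        refine Finsupp.ext fun s => ?_
        cases s with
        | inl i => rw [Finsupp.mapDomain_apply Sum.inl_injective]; simp
        | inr j =>
          rw [Finsupp.mapDomain_notin_range]
          · simp
          · rintro ⟨i, h⟩; exact Sum.inl_ne_inr h
      rw [hd]
    rw [he]
    have := lcx_monomial_mul (Finsupp.sumElim γ 0) (coeff γ q) f α
    simpa using this
  calc lcx (∑ γ ∈ q.support, (embA (n := n) (monomial γ (coeff γ q))) * f) α
      = ∑ γ ∈ q.support, lcx ((embA (n := n) (monomial γ (coeff γ q))) * f) α := by
        induction q.support using Finset.induction with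
        | empty => simp [lcx_eq_zero]; exact lcx_eq_zero (by simp)
        | @insert a s ha IH => rw [Finset.sum_insert ha, Finset.sum_insert ha, lcx_add, IH]
    _ = ∑ γ ∈ q.support, monomial γ (coeff γ q) * lcx f α := Finset.sum_congr rfl this
end Aux


namespace Aux
open MvPolynomial

variable {m n : ℕ}

@[simp] theorem xpart_single_inl (i : Fin m) (b : ℕ) :
    xpart (Finsupp.single (Sum.inl i : Fin m ⊕ Fin n) b) = 0 := by
  ext j; simp [Finsupp.single_apply]
@[simp] theorem apart_single_inl (i : Fin m) (b : ℕ) :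
    apart (Finsupp.single (Sum.inl i : Fin m ⊕ Fin n) b) = Finsupp.single i b := by
  ext i'; simp [Finsupp.single_apply]
@[simp] theorem xpart_single_inr (j : Fin n) (b : ℕ) :
    xpart (Finsupp.single (Sum.inr j : Fin m ⊕ Fin n) b) = Finsupp.single j b := by
  ext j'; simp [Finsupp.single_apply]
@[simp] theorem apart_single_inr (j : Fin n) (b : ℕ) :
    apart (Finsupp.single (Sum.inr j : Fin m ⊕ Fin n) b) = 0 := by
  ext i'; simp [Finsupp.single_apply]

theorem mapDomain_inl_eq_sumElim (γ : Fin m →₀ ℕ) :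
    Finsupp.mapDomain (Sum.inl : Fin m → Fin m ⊕ Fin n) γ =
      Finsupp.sumElim γ (0 : Fin n →₀ ℕ) := by
  refine Finsupp.ext fun s => ?_
  cases s with
  | inl i => rw [Finsupp.mapDomain_apply Sum.inl_injective]; simp
  | inr j =>
    rw [Finsupp.mapDomain_notin_range]
    · simp
    · rintro ⟨i, h⟩; exact Sum.inl_ne_inr h

variable {k : Type*} [Field k] {P : Ideal (MvPolynomial (Fin m) k)}

theorem specPoly_monomial (μ : (Fin m ⊕ Fin n) →₀ ℕ) (c : k) :
    specPoly k P (monomial μ c) =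
      monomial (xpart μ) (specAHom k P (monomial (apart μ) c)) := by
  classical
  induction μ using Finsupp.induction with
  | zero =>
    rw [monomial_zero', xpart_zero, apart_zero, monomial_zero', monomial_zero']
    show MvPolynomial.eval₂Hom _ _ (C c) = _
    rw [eval₂Hom_C]
    rfl
  | single_add s b μ₀ hs hb IH =>
    have hsplit : monomial (Finsupp.single s b + μ₀) c
        = monomial (Finsupp.single s b) (1:k) * monomial μ₀ c := by
      rw [monomial_mul, one_mul]
    rw [hsplit, ← X_pow_eq_monomial, map_mul, map_pow, IH]
    cases s with
    | inl i =>
      have hX : specPoly k P (X (Sum.inl i : Fin m ⊕ Fin n)) =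
          C (specAHom k P (X i)) := by
        show MvPolynomial.eval₂Hom _ _ (X _) = _
        rw [eval₂Hom_X']
        rfl
      rw [hX, ← map_pow, ← map_pow, C_mul_monomial, ← map_mul, X_pow_eq_monomial,
        monomial_mul, one_mul]
      simp [Finsupp.single_add]
    | inr j =>
      have hX : specPoly k P (X (Sum.inr j : Fin m ⊕ Fin n)) =
          (X j : MvPolynomial (Fin n) (FractionRing (MvPolynomial (Fin m) k ⧸ P))) := by
        show MvPolynomial.eval₂Hom _ _ (X _) = _
        rw [eval₂Hom_X']
        rfl
      rw [hX, X_pow_eq_monomial, monomial_mul, one_mul]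
      simp

theorem coeff_specPoly (F : MvPolynomial (Fin m ⊕ Fin n) k) (β : Fin n →₀ ℕ) :
    coeff β (specPoly k P F) = specAHom k P (lcx F β) := by
  classical
  conv_lhs => rw [← MvPolynomial.support_sum_monomial_coeff F]
  rw [map_sum, MvPolynomial.coeff_sum]
  unfold lcx
  rw [map_sum, Finset.sum_filter]
  refine Finset.sum_congr rfl fun μ _ => ?_
  rw [specPoly_monomial, MvPolynomial.coeff_monomial]

theorem specAHom_eq_zero_iff (hP : P.IsPrime) (q : MvPolynomial (Fin m) k) :
    specAHom k P q = 0 ↔ q ∈ P := by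
  haveI := hP
  have h1 : specAHom k P q = algebraMap (MvPolynomial (Fin m) k ⧸ P)
      (FractionRing (MvPolynomial (Fin m) k ⧸ P)) (Ideal.Quotient.mk P q) := rfl
  rw [h1, map_eq_zero_iff _ (IsFractionRing.injective (MvPolynomial (Fin m) k ⧸ P)
      (FractionRing (MvPolynomial (Fin m) k ⧸ P))),
    Ideal.Quotient.eq_zero_iff_mem]

theorem lcx_embA (q : MvPolynomial (Fin m) k) (β : Fin n →₀ ℕ) :
    lcx (embA (n := n) q) β = if β = 0 then q else 0 := by
  classical
  by_cases hβ : β = 0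
  · subst hβ
    rw [if_pos rfl]
    ext γ
    rw [coeff_lcx, ← mapDomain_inl_eq_sumElim]
    exact MvPolynomial.coeff_rename_mapDomain _ Sum.inl_injective q γ
  · rw [if_neg hβ]
    refine lcx_eq_zero fun μ hμ => ?_
    have : μ ∈ (MvPolynomial.rename (Sum.inl : Fin m → Fin m ⊕ Fin n) q).support := hμ
    rw [MvPolynomial.support_rename_of_injective Sum.inl_injective] at this
    obtain ⟨d, _, rfl⟩ := Finset.mem_image.1 this
    rw [mapDomain_inl_eq_sumElim]
    simpa using Ne.symm hβ

theorem specPoly_embA (q : MvPolynomial (Fin m) k) :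
    specPoly k P (embA (n := n) q) = C (specAHom k P q) := by
  ext β
  rw [coeff_specPoly, lcx_embA, MvPolynomial.coeff_C]
  by_cases hβ : β = 0
  · rw [if_pos hβ, if_pos hβ.symm]
  · rw [if_neg hβ, if_neg (fun h => hβ h.symm), map_zero]

theorem lcx_sub (f g : MvPolynomial (Fin m ⊕ Fin n) k) (α : Fin n →₀ ℕ) :
    lcx (f - g) α = lcx f α - lcx g α := by
  ext γ; simp [coeff_lcx, MvPolynomial.coeff_sub]

end Aux


namespace Aux
open MvPolynomial

variable {m n : ℕ} {k : Type*} [Field k] {P : Ideal (MvPolynomial (Fin m) k)}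

theorem exists_xpart_of_lcx_ne_zero {F : MvPolynomial (Fin m ⊕ Fin n) k} {β : Fin n →₀ ℕ}
    (h : lcx F β ≠ 0) : ∃ μ ∈ F.support, xpart μ = β := by
  by_contra hc
  push_neg at hc
  exact h (lcx_eq_zero hc)

theorem exists_xpart_of_mem_support_specPoly {F : MvPolynomial (Fin m ⊕ Fin n) k}
    {β : Fin n →₀ ℕ} (h : β ∈ (specPoly k P F).support) : ∃ μ ∈ F.support, xpart μ = β := by
  rw [MvPolynomial.mem_support_iff, coeff_specPoly] at h
  exact exists_xpart_of_lcx_ne_zero fun h0 => h (by rw [h0, map_zero])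

theorem isExpP_specPoly {prec : (Fin n →₀ ℕ) → (Fin n →₀ ℕ) → Prop} (hP : P.IsPrime)
    {g : MvPolynomial (Fin m ⊕ Fin n) k} {e : Fin n →₀ ℕ}
    (hlc : lcx g e ∉ P) (hx : IsExpX prec g e) :
    IsExpP prec (specPoly k P g) e := by
  constructor
  · rw [MvPolynomial.mem_support_iff, coeff_specPoly]
    exact fun h0 => hlc ((specAHom_eq_zero_iff hP _).1 h0)
  · intro β hβ hne
    obtain ⟨μ, hμ, rfl⟩ := exists_xpart_of_mem_support_specPoly hβ
    exact hx.2 μ hμ hne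

section K
variable {K : Type*} [Field K] {σ' : Type*}

theorem support_C_mul {c : K} (hc : c ≠ 0) (f : MvPolynomial σ' K) :
    (C c * f).support = f.support := by
  ext β
  simp [MvPolynomial.mem_support_iff, MvPolynomial.coeff_C_mul, hc]

theorem isExpP_C_mul {lt : (σ' →₀ ℕ) → (σ' →₀ ℕ) → Prop} {c : K} (hc : c ≠ 0)
    {f : MvPolynomial σ' K} {e : σ' →₀ ℕ} (h : IsExpP lt f e) :
    IsExpP lt (C c * f) e := by
  refine ⟨?_, ?_⟩
  · rw [support_C_mul hc]; exact h.1
  · rw [support_C_mul hc]; exact h.2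

theorem isExpP_monomial_mul {lt : (σ' →₀ ℕ) → (σ' →₀ ℕ) → Prop}
    (hlt : IsMonomialOrder lt) {c : K} (hc : c ≠ 0)
    {f : MvPolynomial σ' K} {e : σ' →₀ ℕ} (h : IsExpP lt f e) (γ : σ' →₀ ℕ) :
    IsExpP lt (monomial γ c * f) (γ + e) := by
  classical
  constructor
  · rw [MvPolynomial.mem_support_iff, MvPolynomial.coeff_monomial_mul]
    exact mul_ne_zero hc (MvPolynomial.mem_support_iff.1 h.1)
  · intro β hβ hne
    have hsub := MvPolynomial.support_mul (monomial γ c) f hβ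
    rw [Finset.mem_add] at hsub
    obtain ⟨γ', hγ', β', hβ', rfl⟩ := hsub
    have hγγ : γ' = γ := by
      have := MvPolynomial.support_monomial_subset hγ'
      simpa using this
    subst hγγ
    have hβf : β' ∈ f.support := hβ'
    have hβe : β' ≠ e := fun hh => hne (by rw [hh])
    have := h.2 β' hβf hβe
    rw [add_comm γ' e, add_comm γ' β']
    exact hlt.add_right _ _ _ this

end K

variable (hP : P.IsPrime)

theorem exists_denom (hP : P.IsPrime)
    (r : MvPolynomial (Fin n) (FractionRing (MvPolynomial (Fin m) k ⧸ P))) :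
    ∃ R : MvPolynomial (Fin m ⊕ Fin n) k, ∃ d : MvPolynomial (Fin m) k, d ∉ P ∧
      specPoly k P R = C (specAHom k P d) * r := by
  haveI := hP
  induction r using MvPolynomial.induction_on with
  | C c =>
    obtain ⟨⟨p, s⟩, hps⟩ := IsLocalization.surj (M := nonZeroDivisors (MvPolynomial (Fin m) k ⧸ P))
      (S := FractionRing (MvPolynomial (Fin m) k ⧸ P)) c
    obtain ⟨p₀, hp₀⟩ := Ideal.Quotient.mk_surjective p
    obtain ⟨d₀, hd₀⟩ := Ideal.Quotient.mk_surjective (s : MvPolynomial (Fin m) k ⧸ P)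
    refine ⟨embA p₀, d₀, ?_, ?_⟩
    · intro hmem
      have : (s : MvPolynomial (Fin m) k ⧸ P) = 0 := by
        rw [← hd₀, Ideal.Quotient.eq_zero_iff_mem]; exact hmem
      exact nonZeroDivisors.ne_zero s.2 this
    · rw [specPoly_embA]
      have h1 : specAHom k P p₀ = algebraMap (MvPolynomial (Fin m) k ⧸ P)
          (FractionRing (MvPolynomial (Fin m) k ⧸ P)) p := by
        rw [← hp₀]; rfl
      have h2 : specAHom k P d₀ = algebraMap (MvPolynomial (Fin m) k ⧸ P)
          (FractionRing (MvPolynomial (Fin m) k ⧸ P)) (s : MvPolynomial (Fin m) k ⧸ P) := by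
        rw [← hd₀]; rfl
      rw [h1, h2, ← hps, map_mul]
      ring
  | add p q hp hq =>
    obtain ⟨R₁, d₁, hd₁, h₁⟩ := hp
    obtain ⟨R₂, d₂, hd₂, h₂⟩ := hq
    refine ⟨embA d₂ * R₁ + embA d₁ * R₂, d₁ * d₂, ?_, ?_⟩
    · intro hmem
      rcases hP.mem_or_mem hmem with h | h
      · exact hd₁ h
      · exact hd₂ h
    · rw [map_add, map_mul, map_mul, specPoly_embA, specPoly_embA, h₁, h₂, map_mul, C_mul]
      ring
  | mul_X p j hp =>
    obtain ⟨R, d, hd, h⟩ := hp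
    refine ⟨R * X (Sum.inr j), d, hd, ?_⟩
    have hX : specPoly k P (X (Sum.inr j : Fin m ⊕ Fin n)) =
        (X j : MvPolynomial (Fin n) (FractionRing (MvPolynomial (Fin m) k ⧸ P))) := by
      show MvPolynomial.eval₂Hom _ _ (X _) = _
      rw [eval₂Hom_X']
      rfl
    rw [map_mul, hX, h]
    ring

theorem exists_denom_mem (hP : P.IsPrime) {J : Ideal (MvPolynomial (Fin m ⊕ Fin n) k)}
    {f : MvPolynomial (Fin n) (FractionRing (MvPolynomial (Fin m) k ⧸ P))}
    (hf : f ∈ Ideal.map (specPoly (n := n) k P) J) :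
    ∃ F ∈ J, ∃ d : MvPolynomial (Fin m) k, d ∉ P ∧
      specPoly k P F = C (specAHom k P d) * f := by
  have hf' : f ∈ Ideal.span (⇑(specPoly (n := n) k P) '' (J : Set (MvPolynomial (Fin m ⊕ Fin n) k))) := hf
  clear hf
  induction hf' using Submodule.span_induction with
  | mem x hx =>
    obtain ⟨F, hF, rfl⟩ := hx
    refine ⟨F, hF, 1, ?_, by rw [map_one, C_1, one_mul]⟩
    intro h1
    exact hP.ne_top (Ideal.eq_top_of_isUnit_mem P h1 isUnit_one)
  | zero => exact ⟨0, J.zero_mem, 1, fun h1 => hP.ne_top (Ideal.eq_top_of_isUnit_mem P h1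
      isUnit_one), by rw [map_zero, mul_zero]⟩
  | add x y hx hy ihx ihy =>
    obtain ⟨F₁, hF₁, d₁, hd₁, h₁⟩ := ihx
    obtain ⟨F₂, hF₂, d₂, hd₂, h₂⟩ := ihy
    refine ⟨embA d₂ * F₁ + embA d₁ * F₂, J.add_mem (J.mul_mem_left _ hF₁) (J.mul_mem_left _ hF₂),
      d₁ * d₂, ?_, ?_⟩
    · intro hmem
      rcases hP.mem_or_mem hmem with h | h
      · exact hd₁ h
      · exact hd₂ h
    · rw [map_add, map_mul, map_mul, specPoly_embA, specPoly_embA, h₁, h₂, map_mul, C_mul]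
      ring
  | smul r x hx ihx =>
    obtain ⟨F, hF, d, hd, h⟩ := ihx
    obtain ⟨R, dr, hdr, hr⟩ := exists_denom hP r
    refine ⟨R * F, J.mul_mem_left _ hF, dr * d, ?_, ?_⟩
    · intro hmem
      rcases hP.mem_or_mem hmem with h' | h'
      · exact hdr h'
      · exact hd h'
    · rw [map_mul, hr, h, smul_eq_mul, map_mul, C_mul]
      ring

end Aux


namespace Aux
open MvPolynomial

variable {m n : ℕ} {k : Type*} [Field k]

theorem xpart_eq_zero_of_mem_support_embA {q : MvPolynomial (Fin m) k}
    {τ : (Fin m ⊕ Fin n) →₀ ℕ} (h : τ ∈ (embA (n := n) q).support) : xpart τ = 0 := by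
  classical
  have : τ ∈ (MvPolynomial.rename (Sum.inl : Fin m → Fin m ⊕ Fin n) q).support := h
  rw [MvPolynomial.support_rename_of_injective Sum.inl_injective] at this
  obtain ⟨d, _, rfl⟩ := Finset.mem_image.1 this
  rw [mapDomain_inl_eq_sumElim, xpart_sumElim]

theorem keyB
    {prec : (Fin n →₀ ℕ) → (Fin n →₀ ℕ) → Prop} (hprec : IsWellMonomialOrder prec)
    {lt0 : (Fin m →₀ ℕ) → (Fin m →₀ ℕ) → Prop} (hlt0 : IsWellMonomialOrder lt0)
    {Q P : Ideal (MvPolynomial (Fin m) k)} (hP : P.IsPrime) (hQP : Q ≤ P)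
    {Jt : Ideal (MvPolynomial (Fin m ⊕ Fin n) k)}
    {G : Finset (MvPolynomial (Fin m ⊕ Fin n) k)} (hGJt : ∀ g ∈ G, g ∈ Jt)
    (hGB : ExpSetP (blockLt prec lt0) Jt =
      ⋃ g ∈ G, {μ | ∃ ε, IsExpP (blockLt prec lt0) g ε ∧ μ ∈ upSetG ε})
    {E : MvPolynomial (Fin m ⊕ Fin n) k → (Fin n →₀ ℕ)} (hE : ∀ g ∈ G, IsExpX prec g (E g))
    {𝒢 : Finset (MvPolynomial (Fin m ⊕ Fin n) k)}
    (h𝒢 : ∀ g, g ∈ 𝒢 ↔ g ∈ G ∧ ¬ ∃ p ∈ Q, g = embA p)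
    (hlcP : ∀ g ∈ 𝒢, lcx g (E g) ∉ P) :
    ∀ μ F, F ∈ Jt → IsExpP (blockLt prec lt0) F μ →
      ∀ e, IsExpP prec (specPoly k P F) e → ∃ g ∈ 𝒢, ∃ γ, e = E g + γ := by
  classical
  have hbw := blockLt_isWMO hprec hlt0
  have wf := wf_of_isWellMonomialOrder hbw
  intro μ
  induction μ using WellFounded.induction wf with
  | _ μ IH =>
  intro F hFJt hFexp e he
  have hσF : specPoly k P F ≠ 0 := by
    intro h0
    have := he.1
    rw [h0] at this
    simp at this
  have hμExp : μ ∈ ExpSetP (blockLt prec lt0) Jt := ⟨F, hFJt, hFexp⟩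
  rw [hGB] at hμExp
  simp only [Set.mem_iUnion, Set.mem_setOf_eq, upSetG] at hμExp
  obtain ⟨g₀, hg₀G, ε, hεexp, δ, hμeq⟩ := hμExp
  have hFX : IsExpX prec F (xpart μ) := isExpX_of_isExpP hFexp
  have heα : leR prec e (xpart μ) := by
    obtain ⟨μe, hμe, hxe⟩ := exists_xpart_of_mem_support_specPoly he.1
    rw [← hxe]
    by_cases hh : xpart μe = xpart μ
    · exact Or.inr hh
    · exact Or.inl (hFX.2 μe hμe hh)
  have hu : MvPolynomial.coeff ε g₀ ≠ 0 := MvPolynomial.mem_support_iff.1 hεexp.1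
  have hc : MvPolynomial.coeff μ F ≠ 0 := MvPolynomial.mem_support_iff.1 hFexp.1
  by_cases hg₀𝒢 : g₀ ∈ 𝒢
  · -- g₀ ∈ 𝒢
    have hEg₀ : xpart ε = E g₀ :=
      isExpX_unique hprec.toIsMonomialOrder (isExpX_of_isExpP hεexp) (hE g₀ hg₀G)
    have hαeq : xpart μ = E g₀ + xpart δ := by rw [hμeq, xpart_add, hEg₀]
    rcases heα with hstrict | heq
    · -- strict: the leading slice dies; pseudo-reduce by g₀
      have hlcxP : lcx F (xpart μ) ∈ P := by
        by_contra hnP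
        have hcoeff : MvPolynomial.coeff (xpart μ) (specPoly k P F) ≠ 0 := by
          rw [coeff_specPoly]
          exact fun h0 => hnP ((specAHom_eq_zero_iff hP _).1 h0)
        have hα_supp : xpart μ ∈ (specPoly k P F).support :=
          MvPolynomial.mem_support_iff.2 hcoeff
        have hne : xpart μ ≠ e := by
          intro hh
          rw [hh] at hstrict
          exact hprec.irrefl _ hstrict
        exact hprec.irrefl _ (hprec.trans _ _ _ hstrict (he.2 (xpart μ) hα_supp hne))
      set L := lcx g₀ (E g₀) with hLdef
      have hL : L ∉ P := hlcP g₀ hg₀𝒢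
      set A := lcx F (xpart μ) with hAdef
      set β := xpart δ with hβdef
      set F' := embA (n := n) L * F -
        embA (n := n) A * (monomial (Finsupp.sumElim 0 β) 1 * g₀) with hF'def
      have hF'Jt : F' ∈ Jt :=
        Jt.sub_mem (Jt.mul_mem_left _ hFJt)
          (Jt.mul_mem_left _ (Jt.mul_mem_left _ (hGJt g₀ hg₀G)))
      have hσA : specAHom k P A = 0 := (specAHom_eq_zero_iff hP _).2 hlcxP
      have hσL : specAHom k P L ≠ 0 := fun h0 => hL ((specAHom_eq_zero_iff hP _).1 h0)
      have hσF' : specPoly k P F' = C (specAHom k P L) * specPoly k P F := by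
        rw [hF'def, map_sub, map_mul, map_mul, specPoly_embA, specPoly_embA, hσA, map_zero,
          zero_mul]
        simp
      have hCL : (C (specAHom k P L) :
          MvPolynomial (Fin n) (FractionRing (MvPolynomial (Fin m) k ⧸ P))) ≠ 0 := by
        intro h0
        exact hσL (MvPolynomial.C_eq_zero.1 h0)
      have hσF'ne : specPoly k P F' ≠ 0 := by
        rw [hσF']
        exact mul_ne_zero hCL hσF
      have he' : IsExpP prec (specPoly k P F') e := by
        rw [hσF']
        exact isExpP_C_mul hσL he
      -- the x-leading slice of F' vanishes
      have hslice : lcx F' (xpart μ) = 0 := by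
        have e1 : lcx (embA (n := n) L * F) (xpart μ) = L * A := by
          rw [lcx_embA_mul, hAdef]
        have e2 : lcx (embA (n := n) A *
            (monomial (Finsupp.sumElim 0 β) 1 * g₀)) (xpart μ) = A * L := by
          rw [lcx_embA_mul]
          have h1 : xpart μ = xpart (Finsupp.sumElim (0 : Fin m →₀ ℕ) β) + E g₀ := by
            rw [xpart_sumElim, hαeq, add_comm]
          rw [h1, lcx_monomial_mul, apart_sumElim, monomial_zero', MvPolynomial.C_1, one_mul,
            hLdef]
        rw [hF'def, lcx_sub, e1, e2]
        ring
      -- every exponent of F' is blockLt-below μ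
      have hbelow : ∀ τ ∈ F'.support, blockLt prec lt0 τ μ := by
        intro τ hτ
        have hle : leR prec (xpart τ) (xpart μ) := by
          have hsub : τ ∈ (embA (n := n) L * F).support ∪
              (embA (n := n) A * (monomial (Finsupp.sumElim 0 β) 1 * g₀)).support :=
            MvPolynomial.support_sub _ _ _ hτ
          rcases Finset.mem_union.1 hsub with h' | h'
          · obtain ⟨τ₁, hτ₁, τ₂, hτ₂, rfl⟩ :=
              Finset.mem_add.1 (MvPolynomial.support_mul _ _ h')
            rw [xpart_add, xpart_eq_zero_of_mem_support_embA hτ₁, zero_add]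
            by_cases hh : xpart τ₂ = xpart μ
            · exact Or.inr hh
            · exact Or.inl (hFX.2 τ₂ hτ₂ hh)
          · obtain ⟨τ₁, hτ₁, τ₂, hτ₂, rfl⟩ :=
              Finset.mem_add.1 (MvPolynomial.support_mul _ _ h')
            obtain ⟨τ₃, hτ₃, τ₄, hτ₄, rfl⟩ :=
              Finset.mem_add.1 (MvPolynomial.support_mul _ _ hτ₂)
            have hτ₃' : τ₃ = Finsupp.sumElim 0 β :=
              Finset.mem_singleton.1 (MvPolynomial.support_monomial_subset hτ₃)
            rw [xpart_add, xpart_eq_zero_of_mem_support_embA hτ₁, zero_add, xpart_add,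
              hτ₃', xpart_sumElim, hαeq]
            have h4 : leR prec (xpart τ₄) (E g₀) := by
              by_cases hh : xpart τ₄ = E g₀
              · exact Or.inr hh
              · exact Or.inl ((hE g₀ hg₀G).2 τ₄ hτ₄ hh)
            have := IWMO.leR_add_right hprec.toIsMonomialOrder β h4
            rw [add_comm (E g₀) β]
            rwa [add_comm (xpart τ₄) β, add_comm (E g₀) β] at this
        have hne : xpart τ ≠ xpart μ := by
          intro hh
          have : MvPolynomial.coeff τ F' = 0 := by
            have h1 : MvPolynomial.coeff τ F' =
                MvPolynomial.coeff (apart τ) (lcx F' (xpart μ)) := by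
              rw [coeff_lcx, ← hh, sumElim_parts]
            rw [h1, hslice, MvPolynomial.coeff_zero]
          exact MvPolynomial.mem_support_iff.1 hτ this
        rcases hle with h' | h'
        · exact Or.inl h'
        · exact absurd h' hne
      have hF'ne : F' ≠ 0 := fun h0 => hσF'ne (by rw [h0, map_zero])
      obtain ⟨μ', hμ'⟩ := exists_isExpP hbw.toIsMonomialOrder hF'ne
      exact IH μ' (hbelow μ' hμ'.1) F' hF'Jt hμ' e he'
    · -- e = xpart μ : done
      exact ⟨g₀, hg₀𝒢, xpart δ, by rw [heq, hαeq]⟩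
  · -- g₀ ∉ 𝒢 : g₀ = embA p with p ∈ Q; reduce, specialization unchanged
    have hp : ∃ p ∈ Q, g₀ = embA (n := n) p := by
      by_contra hcon
      exact hg₀𝒢 ((h𝒢 g₀).2 ⟨hg₀G, hcon⟩)
    obtain ⟨p, hpQ, hg₀eq⟩ := hp
    set t := monomial δ (MvPolynomial.coeff μ F * (MvPolynomial.coeff ε g₀)⁻¹) * g₀ with htdef
    set F₁ := F - t with hF₁def
    have hF₁Jt : F₁ ∈ Jt := Jt.sub_mem hFJt (Jt.mul_mem_left _ (hGJt g₀ hg₀G))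
    have hσg₀ : specPoly k P g₀ = 0 := by
      rw [hg₀eq, specPoly_embA, (specAHom_eq_zero_iff hP p).2 (hQP hpQ), map_zero]
    have hσF₁ : specPoly k P F₁ = specPoly k P F := by
      rw [hF₁def, map_sub, htdef, map_mul, hσg₀, mul_zero]
      simp
    have hbelow : ∀ τ ∈ F₁.support, blockLt prec lt0 τ μ := by
      intro τ hτ
      have hτμ : τ ≠ μ := by
        intro hh
        subst hh
        have hcoefft : MvPolynomial.coeff τ F₁ = 0 := by
          rw [hF₁def, MvPolynomial.coeff_sub, htdef, hμeq, add_comm ε δ,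
            MvPolynomial.coeff_monomial_mul, inv_mul_cancel_right₀ hu, sub_self]
        exact MvPolynomial.mem_support_iff.1 hτ hcoefft
      have hsub : τ ∈ F.support ∪ t.support := MvPolynomial.support_sub _ _ _ hτ
      rcases Finset.mem_union.1 hsub with h' | h'
      · exact hFexp.2 τ h' hτμ
      · obtain ⟨τ₁, hτ₁, τ₂, hτ₂, rfl⟩ := Finset.mem_add.1 (MvPolynomial.support_mul _ _ h')
        have hτ₁' : τ₁ = δ :=
          Finset.mem_singleton.1 (MvPolynomial.support_monomial_subset hτ₁)
        subst hτ₁'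
        have hτ₂ε : τ₂ ≠ ε := by
          intro hh
          exact hτμ (by rw [hh, hμeq, add_comm])
        have := hεexp.2 τ₂ hτ₂ hτ₂ε
        have h2 := hbw.add_right _ _ τ₁ this
        rw [add_comm τ₂ τ₁, add_comm ε τ₁] at h2
        rw [hμeq, add_comm ε τ₁]
        exact h2
    have hF₁ne : F₁ ≠ 0 := fun h0 => hσF (by rw [← hσF₁, h0, map_zero])
    obtain ⟨μ₁, hμ₁⟩ := exists_isExpP hbw.toIsMonomialOrder hF₁ne
    refine IH μ₁ (hbelow μ₁ hμ₁.1) F₁ hF₁Jt hμ₁ e ?_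
    rwa [hσF₁]
end Aux


/-- with `G` a minimal Gröbner basis of `J̃ = J + Q·k[a,x]` for the block
order, `𝒢 = {g ∈ G : g ∉ Q}` and `h = ∏_{g ∈ 𝒢} lc_≺(g)`, for every prime `P ⊇ Q` of
`k[a]` with `h ∉ P` the set `{(g)_P : g ∈ 𝒢}` is a `≺`-Gröbner basis of `(J)_P`. -/
theorem genGB_polynomial_case {m n : ℕ} (k : Type) [Field k]
    (prec : (Fin n →₀ ℕ) → (Fin n →₀ ℕ) → Prop) (hprec : IsWellMonomialOrder prec)
    (lt0 : (Fin m →₀ ℕ) → (Fin m →₀ ℕ) → Prop) (hlt0 : IsWellMonomialOrder lt0)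
    (Q : Ideal (MvPolynomial (Fin m) k)) (hQ : Q.IsPrime)
    (J : Ideal (MvPolynomial (Fin m ⊕ Fin n) k))
    (Jt : Ideal (MvPolynomial (Fin m ⊕ Fin n) k))
    (hJt : Jt = J ⊔ Ideal.map (embA (n := n)) Q)
    (G : Finset (MvPolynomial (Fin m ⊕ Fin n) k))
    (hGJt : ∀ g ∈ G, g ∈ Jt) (hGne : ∀ g ∈ G, g ≠ 0)
    (hGB : ExpSetP (blockLt prec lt0) Jt =
      ⋃ g ∈ G, {μ | ∃ ε, IsExpP (blockLt prec lt0) g ε ∧ μ ∈ upSetG ε})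
    (hmin : ∀ g ∈ G, ∀ g' ∈ G, g ≠ g' → ∀ ε ε',
      IsExpP (blockLt prec lt0) g ε → IsExpP (blockLt prec lt0) g' ε' → ε ∉ upSetG ε')
    (E : MvPolynomial (Fin m ⊕ Fin n) k → (Fin n →₀ ℕ))
    (hE : ∀ g ∈ G, IsExpX prec g (E g))
    (𝒢 : Finset (MvPolynomial (Fin m ⊕ Fin n) k))
    (h𝒢 : ∀ g, g ∈ 𝒢 ↔ g ∈ G ∧ ¬ ∃ p ∈ Q, g = embA p)
    (P : Ideal (MvPolynomial (Fin m) k)) (hP : P.IsPrime) (hQP : Q ≤ P)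
    (hhP : (∏ g ∈ 𝒢, lcx g (E g)) ∉ P) :
    (∀ g ∈ 𝒢, specPoly k P g ∈ Ideal.map (specPoly (n := n) k P) J) ∧
    (ExpSetP prec (Ideal.map (specPoly (n := n) k P) J) =
      ⋃ g ∈ 𝒢, {α | ∃ e, IsExpP prec (specPoly k P g) e ∧ α ∈ upSetG e}) := by
    classical
  have hlcP : ∀ g ∈ 𝒢, lcx g (E g) ∉ P := by
    intro g hg hmem
    apply hhP
    rw [← Finset.mul_prod_erase 𝒢 (fun g' => lcx g' (E g')) hg]
    exact Ideal.mul_mem_right _ P hmem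
  have hJtle : Ideal.map (specPoly (n := n) k P) Jt ≤ Ideal.map (specPoly (n := n) k P) J := by
    rw [hJt, Ideal.map_sup]
    refine sup_le le_rfl ?_
    rw [Ideal.map_map, Ideal.map_le_iff_le_comap]
    intro q hq
    show ((specPoly (n := n) k P).comp (embA (n := n))) q ∈ Ideal.map (specPoly (n := n) k P) J
    rw [RingHom.comp_apply, Aux.specPoly_embA,
      (Aux.specAHom_eq_zero_iff hP q).2 (hQP hq), map_zero]
    exact Ideal.zero_mem _
  have hspec : ∀ g ∈ 𝒢, specPoly k P g ∈ Ideal.map (specPoly (n := n) k P) J := by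
    intro g hg
    exact hJtle (Ideal.mem_map_of_mem _ (hGJt g ((h𝒢 g).1 hg).1))
  refine ⟨hspec, Set.Subset.antisymm ?_ ?_⟩
  · rintro e ⟨f, hfJ, hfe⟩
    obtain ⟨F, hFJ, d, hdP, hσF⟩ := Aux.exists_denom_mem hP hfJ
    have hd0 : specAHom k P d ≠ 0 := fun h0 => hdP ((Aux.specAHom_eq_zero_iff hP d).1 h0)
    have hFJt : F ∈ Jt := by rw [hJt]; exact Ideal.mem_sup_left hFJ
    have hσFexp : IsExpP prec (specPoly k P F) e := by
      rw [hσF]; exact Aux.isExpP_C_mul hd0 hfe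
    have hσFne : specPoly k P F ≠ 0 := by
      intro h0
      have := hσFexp.1
      rw [h0] at this
      simp at this
    have hFne : F ≠ 0 := fun h0 => hσFne (by rw [h0, map_zero])
    obtain ⟨μ, hμ⟩ := Aux.exists_isExpP (Aux.blockLt_isWMO hprec hlt0).toIsMonomialOrder hFne
    obtain ⟨g, hg𝒢, γ, hγ⟩ :=
      Aux.keyB hprec hlt0 hP hQP hGJt hGB hE h𝒢 hlcP μ F hFJt hμ e hσFexp
    refine Set.mem_iUnion.2 ⟨g, Set.mem_iUnion.2 ⟨hg𝒢, ?_⟩⟩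
    exact ⟨E g, Aux.isExpP_specPoly hP (hlcP g hg𝒢) (hE g ((h𝒢 g).1 hg𝒢).1), ⟨γ, hγ⟩⟩
  · intro α hα
    simp only [Set.mem_iUnion, Set.mem_setOf_eq, upSetG] at hα
    obtain ⟨g, hg𝒢, e₀, he₀, γ, hγ⟩ := hα
    have hgexp : IsExpP prec (specPoly k P g) (E g) :=
      Aux.isExpP_specPoly hP (hlcP g hg𝒢) (hE g ((h𝒢 g).1 hg𝒢).1)
    have he₀eq : e₀ = E g := Aux.isExpP_unique hprec.toIsMonomialOrder he₀ hgexp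
    refine ⟨MvPolynomial.monomial γ 1 * specPoly k P g, Ideal.mul_mem_left _ _ (hspec g hg𝒢), ?_⟩
    have hmul := Aux.isExpP_monomial_mul hprec.toIsMonomialOrder one_ne_zero hgexp γ
    rw [hγ, he₀eq, add_comm (E g) γ]
    exact hmul
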